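/- Let m ≥ 1 be an integer and let X be a real-valued random variable with Pr(X = 1) = 1 − 2^{−m} and Pr(X = 2^{2m}) = 2^{−m}. Then Var[X] ≥ 2^{m−3}·(E[X])². -/

import Mathlib

open MeasureTheory ProbabilityTheory

/-- **High critical ratio.** If `X` takes the value `1` with probability `1 - 2⁻ᵐ` and the
value `2^(2m)` with probability `2⁻ᵐ` (the diameter of the identically distributed weighted
graph with `2` vertices and `m` parallel edges), then `Var[X] ≥ 2^(m-3) · (E[X])²`. -/
theorem high_critical_ratio {Ω : Type*} [MeasurableSpace Ω]
    (P : Measure Ω) [IsProbabilityMeasure P]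
    (m : ℕ) (hm : 1 ≤ m) (X : Ω → ℝ) (hX : Measurable X)
    (h1 : P {ω | X ω = 1} = ENNReal.ofReal (1 - ((2 : ℝ) ^ m)⁻¹))
    (h2 : P {ω | X ω = (2 : ℝ) ^ (2 * m)} = ENNReal.ofReal (((2 : ℝ) ^ m)⁻¹)) :
    variance X P ≥ (2 : ℝ) ^ ((m : ℝ) - 3) * (∫ ω, X ω ∂P) ^ 2 := by
  set a : ℝ := (2:ℝ)^m with ha
  have ha2 : (2:ℝ) ≤ a := by
    rw [ha]
    calc (2:ℝ) = 2^1 := by norm_num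
    _ ≤ 2^m := by apply pow_le_pow_right₀ (by norm_num) hm
  have ha0 : (0:ℝ) < a := by linarith
  set p : ℝ := a⁻¹ with hp
  have hp0 : (0:ℝ) < p := by positivity
  have hp1 : p ≤ 1/2 := by
    rw [hp]; rw [inv_le_comm₀ (by linarith) (by norm_num)]; linarith
  set c : ℝ := (2:ℝ)^(2*m) with hc
  have hca : c = a^2 := by rw [hc, ha, ← pow_mul, mul_comm]
  have hc4 : (4:ℝ) ≤ c := by nlinarith
  set A := {ω | X ω = 1} with hAdef
  set B := {ω | X ω = c} with hBdef
  have hA : MeasurableSet A := hX (measurableSet_singleton 1)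
  have hB : MeasurableSet B := hX (measurableSet_singleton c)
  have hAB : Disjoint A B := by
    rw [Set.disjoint_left]
    intro ω h1' h2'
    simp only [hAdef, hBdef, Set.mem_setOf_eq] at h1' h2'
    rw [h1'] at h2'; linarith
  have hunion : P (A ∪ B) = 1 := by
    rw [measure_union hAB hB, h1, h2,
      ← ENNReal.ofReal_add (by linarith) hp0.le]
    norm_num
  have hcompl : P (A ∪ B)ᶜ = 0 := by
    rw [measure_compl (hA.union hB) (measure_ne_top _ _), hunion, measure_univ,
      tsub_self]
  have hae : ∀ᵐ ω ∂P, ω ∈ A ∪ B := by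
    rw [MeasureTheory.ae_iff]
    convert hcompl using 2
    rfl
  -- helper: integral of an A-piecewise function
  have key : ∀ b : ℝ, (∫ ω, (if ω ∈ A then (1:ℝ) else b) ∂P) = (1 - p) + p * b := by
    intro b
    have heq : (fun ω => if ω ∈ A then (1:ℝ) else b)
        = fun ω => A.indicator (fun _ => (1:ℝ)) ω + Aᶜ.indicator (fun _ => b) ω := by
      ext ω
      by_cases h : ω ∈ A <;> simp [h, Set.indicator_apply]
    rw [heq, integral_add ((integrable_const (1:ℝ)).indicator hA)
      ((integrable_const b).indicator hA.compl),
      integral_indicator_const _ hA, integral_indicator_const _ hA.compl]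
    have hPA : P A = ENNReal.ofReal (1 - p) := h1
    have hPAc : P Aᶜ = ENNReal.ofReal p := by
      rw [measure_compl hA (measure_ne_top _ _), measure_univ, hPA]
      rw [← ENNReal.ofReal_one, ← ENNReal.ofReal_sub _ (by linarith)]
      norm_num
    rw [measureReal_def, measureReal_def, hPA, hPAc, ENNReal.toReal_ofReal (by linarith), ENNReal.toReal_ofReal hp0.le]
    simp only [smul_eq_mul]
    ring
  set Y : Ω → ℝ := fun ω => if ω ∈ A then 1 else c with hYdef
  have hXY : X =ᵐ[P] Y := by
    filter_upwards [hae] with ω h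
    rcases h with h | h
    · have hx : X ω = 1 := h
      simp [hYdef, h, hx]
    · have hx : X ω = c := h
      have hnA : ω ∉ A := by
        intro h'
        have : X ω = 1 := h'
        rw [hx] at this; linarith
      simp [hYdef, hnA, hx]
  have hYmeas : Measurable Y := Measurable.ite hA measurable_const measurable_const
  have hYbdd : MemLp Y 2 P := by
    apply MemLp.of_bound hYmeas.aestronglyMeasurable (max 1 c)
    filter_upwards with ω
    by_cases h : ω ∈ A
    · simp only [hYdef, h, if_true]
      rw [norm_one]; exact le_max_left _ _
    · simp only [hYdef, h, if_false]
      rw [Real.norm_eq_abs, abs_of_nonneg (by linarith)]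
      exact le_max_right _ _
  have hXmem : MemLp X 2 P := hYbdd.ae_eq hXY.symm
  have hvar : variance X P = ((1-p) + p * c^2) - ((1-p) + p*c)^2 := by
    rw [variance_eq_sub hXmem]
    have hEX : ∫ ω, X ω ∂P = (1-p) + p*c := by
      rw [integral_congr_ae hXY, hYdef]
      exact key c
    have hEX2 : ∫ ω, (X^2) ω ∂P = (1-p) + p*c^2 := by
      have h2' : (X^2) =ᵐ[P] (fun ω => if ω ∈ A then (1:ℝ) else c^2) := by
        filter_upwards [hXY] with ω h
        simp only [Pi.pow_apply, h, hYdef]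
        by_cases hω : ω ∈ A <;> simp [hω]
      rw [integral_congr_ae h2']
      exact key (c^2)
    rw [hEX, hEX2]
  have hEX : ∫ ω, X ω ∂P = (1-p) + p*c := by
    rw [integral_congr_ae hXY, hYdef]; exact key c
  rw [hvar, hEX]
  have hrpow : (2:ℝ) ^ ((m : ℝ) - 3) = a / 8 := by
    rw [Real.rpow_sub (by norm_num), Real.rpow_natCast, ha]
    norm_num
  rw [hrpow]
  have hpa : p * a = 1 := inv_mul_cancel₀ (ne_of_gt ha0)
  rw [hca]
  have hpc : p * a^2 = a := by
    rw [pow_two, ← mul_assoc, hpa, one_mul]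
  have hpc2 : p * (a^2)^2 = a^3 := by
    rw [hp]; field_simp
  rw [hpc, hpc2]
  -- goal: 1 - p + a^3 - (1 - p + a)^2 ≥ a/8 * (1 - p + a)^2
  rw [ge_iff_le, ← sub_nonneg]
  have h8 : 0 < (8:ℝ) * a^2 := by positivity
  rw [← mul_nonneg_iff_of_pos_left (c := 8*a^2)]
  · have hpe : p = a⁻¹ := hp
    rw [hpe]
    have : 8*a^2 * (1 - a⁻¹ + a^3 - (1 - a⁻¹ + a)^2 - a/8 * (1 - a⁻¹ + a)^2)
        = 7*a^5 - 10*a^4 - 15*a^3 + 18*a^2 + 7*a - 8 := by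
      field_simp
      ring
    rw [this]
    nlinarith [sq_nonneg (a-2), sq_nonneg a, pow_pos ha0 3, pow_pos ha0 4,
      mul_nonneg (mul_nonneg (sq_nonneg (a-2)) (pow_pos ha0 3).le) (by linarith : (0:ℝ) ≤ a - 2)]
  · exact h8
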